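/- arXiv:1805.06769 — 2 statements merged into one kernel-verified Lean document; each statement's English description precedes it below -/
import Mathlib

section
/- Let μ₁, μ₂² ≥ 0 satisfy δ := (μ₁−1)² − 4μ₂² ≥ 0 and define λ(t) := (1+t)^{(μ₁+1)/2} K_{√δ/2}(1+t) for t ≥ 0. Then λ is twice differentiable on (0,∞) and satisfies (1+t)² λ''(t) − μ₁(1+t) λ'(t) + (μ₁ + μ₂² − (1+t)²) λ(t) = 0 for all t > 0; moreover λ(0) = K_{√δ/2}(1) and λ(t) → 0 as t → ∞. -/
open MeasureTheory Real Set Filter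

noncomputable section

/-- Modified Bessel function of the second kind:
`K_ν(t) = ∫₀^∞ exp(−t cosh z) cosh(νz) dz`. -/
def besselK (ν t : ℝ) : ℝ :=
  ∫ z in Set.Ioi (0:ℝ), Real.exp (-t * Real.cosh z) * Real.cosh (ν * z)

/-- `λ(t) = (1+t)^{(μ₁+1)/2} K_{√δ/2}(1+t)`. -/
def lamK (μ₁ δ t : ℝ) : ℝ := (1 + t) ^ ((μ₁ + 1) / 2) * besselK (Real.sqrt δ / 2) (1 + t)

/-! ### Auxiliary material -/

lemma key_bound (a t : ℝ) (ht : 0 < t) {z : ℝ} (hz : 0 ≤ z) :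
    a * z - t * Real.cosh z ≤ 2 * (a + 1) ^ 2 / t - z := by
  have h1 : (1 + z / 2) ^ 2 ≤ Real.exp z := by
    have := Real.add_one_le_exp (z / 2)
    calc (1 + z / 2) ^ 2 ≤ Real.exp (z / 2) ^ 2 := by
          apply pow_le_pow_left₀ (by linarith) (by linarith) 2
      _ = Real.exp z := by rw [sq, ← Real.exp_add]; norm_num
  have h2 : Real.exp z / 2 ≤ Real.cosh z := by
    rw [Real.cosh_eq]
    have := (Real.exp_pos (-z)).le
    linarith
  have h3 : (1 + z / 2) ^ 2 / 2 ≤ Real.cosh z := by nlinarith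
  have h4 : t * ((a + 1) * z) ≤ t ^ 2 * z ^ 2 / 8 + 2 * (a + 1) ^ 2 := by
    nlinarith [sq_nonneg (t * z - 4 * (a + 1))]
  have h5 : t * ((1 + z / 2) ^ 2 / 2) ≤ t * Real.cosh z :=
    mul_le_mul_of_nonneg_left h3 ht.le
  rw [div_sub' ht.ne', le_div_iff₀ ht]
  nlinarith

lemma integrable_exp_linear_sub_cosh (a t : ℝ) (ht : 0 < t) :
    IntegrableOn (fun z : ℝ => Real.exp (a * z - t * Real.cosh z)) (Ioi 0) := by
  set M := 2 * (a + 1) ^ 2 / t with hM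
  have hg : IntegrableOn (fun z : ℝ => Real.exp M * Real.exp (-1 * z)) (Ioi 0) :=
    (exp_neg_integrableOn_Ioi 0 one_pos).const_mul _
  refine hg.mono' ?_ ?_
  · exact (Continuous.aestronglyMeasurable (by continuity)).restrict
  · rw [ae_restrict_iff' measurableSet_Ioi]
    filter_upwards with z hz
    rw [Real.norm_eq_abs, abs_of_pos (Real.exp_pos _), ← Real.exp_add]
    apply Real.exp_le_exp.2
    have := key_bound a t ht (le_of_lt hz)
    linarith

lemma integrable_of_le_exp {f : ℝ → ℝ} (hf : Continuous f) (a t : ℝ) (ht : 0 < t)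
    (h : ∀ z : ℝ, 0 < z → |f z| ≤ Real.exp (a * z - t * Real.cosh z)) :
    IntegrableOn f (Ioi 0) := by
  refine (integrable_exp_linear_sub_cosh a t ht).mono' hf.aestronglyMeasurable.restrict ?_
  rw [ae_restrict_iff' measurableSet_Ioi]
  filter_upwards with z hz
  simpa using h z hz

lemma cosh_le_exp_abs (x : ℝ) : Real.cosh x ≤ Real.exp |x| := by
  rw [Real.cosh_eq]
  have h1 : Real.exp x ≤ Real.exp |x| := Real.exp_le_exp.2 (le_abs_self x)
  have h2 : Real.exp (-x) ≤ Real.exp |x| := Real.exp_le_exp.2 (neg_le_abs x)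
  linarith

lemma abs_sinh_le_exp_abs (x : ℝ) : |Real.sinh x| ≤ Real.exp |x| := by
  rw [Real.abs_sinh]
  calc Real.sinh |x| ≤ Real.cosh |x| := by
        rw [Real.sinh_eq, Real.cosh_eq]
        have := (Real.exp_pos (-|x|)).le; linarith
    _ ≤ Real.exp |x| := by simpa using cosh_le_exp_abs |x|

lemma integrand_bound (ν x c : ℝ) (k : ℕ) (hc : 0 < c) (hx : c ≤ x) {z : ℝ} (hz : 0 ≤ z) :
    ‖Real.cosh z ^ k * (Real.exp (-x * Real.cosh z) * Real.cosh (ν * z))‖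
      ≤ Real.exp (((k : ℝ) + |ν|) * z - c * Real.cosh z) := by
  have hcz : (0:ℝ) < Real.cosh z := Real.cosh_pos z
  have h1 : Real.cosh z ^ k ≤ Real.exp ((k : ℝ) * z) := by
    calc Real.cosh z ^ k ≤ Real.exp z ^ k :=
          pow_le_pow_left₀ hcz.le (by simpa [abs_of_nonneg hz] using cosh_le_exp_abs z) k
      _ = Real.exp ((k : ℝ) * z) := by rw [← Real.exp_nat_mul]
  have h2 : Real.exp (-x * Real.cosh z) ≤ Real.exp (-c * Real.cosh z) := by
    apply Real.exp_le_exp.2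
    nlinarith
  have h3 : Real.cosh (ν * z) ≤ Real.exp (|ν| * z) := by
    calc Real.cosh (ν * z) ≤ Real.exp |ν * z| := cosh_le_exp_abs _
      _ = Real.exp (|ν| * z) := by rw [abs_mul, abs_of_nonneg hz]
  rw [norm_eq_abs, abs_of_nonneg (by positivity)]
  calc Real.cosh z ^ k * (Real.exp (-x * Real.cosh z) * Real.cosh (ν * z))
      ≤ Real.exp ((k:ℝ) * z) * (Real.exp (-c * Real.cosh z) * Real.exp (|ν| * z)) := by
        apply mul_le_mul h1 ?_ (by positivity) (Real.exp_pos _).le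
        exact mul_le_mul h2 h3 (Real.cosh_pos _).le (Real.exp_pos _).le
    _ = Real.exp (((k : ℝ) + |ν|) * z - c * Real.cosh z) := by
        rw [← Real.exp_add, ← Real.exp_add]; ring_nf

/-- Iterated "derivative" integrals of `besselK`. -/
def besselKd (k : ℕ) (ν t : ℝ) : ℝ :=
  ∫ z in Set.Ioi (0:ℝ), (-Real.cosh z) ^ k * (Real.exp (-t * Real.cosh z) * Real.cosh (ν * z))

lemma continuous_besselKd_integrand (k : ℕ) (ν x : ℝ) :
    Continuous (fun z : ℝ =>
      (-Real.cosh z) ^ k * (Real.exp (-x * Real.cosh z) * Real.cosh (ν * z))) := by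
  continuity

lemma abs_besselKd_integrand (k : ℕ) (ν x : ℝ) (z : ℝ) :
    ‖(-Real.cosh z) ^ k * (Real.exp (-x * Real.cosh z) * Real.cosh (ν * z))‖
      = ‖Real.cosh z ^ k * (Real.exp (-x * Real.cosh z) * Real.cosh (ν * z))‖ := by
  simp only [norm_eq_abs, abs_mul, abs_pow, abs_neg]

lemma besselKd_integrableOn (k : ℕ) (ν x : ℝ) (hx : 0 < x) :
    IntegrableOn (fun z : ℝ =>
      (-Real.cosh z) ^ k * (Real.exp (-x * Real.cosh z) * Real.cosh (ν * z))) (Ioi 0) := by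
  apply integrable_of_le_exp (continuous_besselKd_integrand k ν x) ((k : ℝ) + |ν|) x hx
  intro z hz
  rw [← Real.norm_eq_abs, abs_besselKd_integrand]
  exact integrand_bound ν x x k hx le_rfl hz.le

lemma hasDerivAt_besselKd (k : ℕ) (ν t : ℝ) (ht : 0 < t) :
    HasDerivAt (besselKd k ν) (besselKd (k + 1) ν t) t := by
  have ht2 : 0 < t / 2 := by linarith
  have key := hasDerivAt_integral_of_dominated_loc_of_deriv_le (μ := volume.restrict (Ioi 0))
    (F := fun x z => (-Real.cosh z) ^ k * (Real.exp (-x * Real.cosh z) * Real.cosh (ν * z)))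
    (F' := fun x z => (-Real.cosh z) ^ (k + 1) *
      (Real.exp (-x * Real.cosh z) * Real.cosh (ν * z)))
    (x₀ := t) (s := Metric.ball t (t / 2))
    (bound := fun z => Real.exp ((((k : ℝ) + 1) + |ν|) * z - (t / 2) * Real.cosh z))
    (Metric.ball_mem_nhds t ht2) ?_ ?_ ?_ ?_ ?_ ?_
  · exact key.2
  · filter_upwards with x
    exact (continuous_besselKd_integrand k ν x).aestronglyMeasurable.restrict
  · exact besselKd_integrableOn k ν t ht
  · exact (continuous_besselKd_integrand (k+1) ν t).aestronglyMeasurable.restrict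
  · rw [ae_restrict_iff' measurableSet_Ioi]
    filter_upwards with z hz x hx
    have hx2 : t / 2 ≤ x := by
      rw [Metric.mem_ball, Real.dist_eq, abs_lt] at hx
      linarith
    rw [abs_besselKd_integrand]
    have := integrand_bound ν x (t/2) (k+1) ht2 hx2 hz.out.le
    convert this using 3
    push_cast; ring
  · exact integrable_exp_linear_sub_cosh _ _ ht2
  · rw [ae_restrict_iff' measurableSet_Ioi]
    filter_upwards with z hz x hx
    have h1 : HasDerivAt (fun x : ℝ => Real.exp (-x * Real.cosh z))
        (-Real.cosh z * Real.exp (-x * Real.cosh z)) x := by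
      have := (((hasDerivAt_id x).neg.mul_const (Real.cosh z)).exp)
      simp only [Pi.neg_apply, id_eq] at this
      refine this.congr_deriv (Eq.symm ?_)
      ring
    have := ((h1.mul_const (Real.cosh (ν * z))).const_mul ((-Real.cosh z) ^ k))
    refine this.congr_deriv (Eq.symm ?_)
    ring

lemma besselK_eq (ν : ℝ) : besselK ν = besselKd 0 ν := by
  funext t; simp [besselK, besselKd]

/-- The boundary term for integration by parts. -/
def besselP (ν t z : ℝ) : ℝ :=
  Real.exp (-t * Real.cosh z) * (ν * Real.sinh (ν * z) + t * Real.sinh z * Real.cosh (ν * z))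

lemma hasDerivAt_neg_besselP (ν t z : ℝ) :
    HasDerivAt (fun z => -besselP ν t z)
      (t^2 * ((-Real.cosh z) ^ 2 * (Real.exp (-t * Real.cosh z) * Real.cosh (ν * z)))
        + t * ((-Real.cosh z) ^ 1 * (Real.exp (-t * Real.cosh z) * Real.cosh (ν * z)))
        - (t^2 + ν^2) * ((-Real.cosh z) ^ 0 *
            (Real.exp (-t * Real.cosh z) * Real.cosh (ν * z)))) z := by
  have hE : HasDerivAt (fun z : ℝ => Real.exp (-t * Real.cosh z))
      (-t * Real.sinh z * Real.exp (-t * Real.cosh z)) z := by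
    have := ((Real.hasDerivAt_cosh z).const_mul (-t)).exp
    convert this using 1
    ring
  have hmul : HasDerivAt (fun y : ℝ => ν * y) ν z := by
    simpa using (hasDerivAt_id z).const_mul ν
  have hs1 : HasDerivAt (fun z : ℝ => Real.sinh (ν * z)) (Real.cosh (ν * z) * ν) z :=
    (Real.hasDerivAt_sinh (ν * z)).comp z hmul
  have hc1 : HasDerivAt (fun z : ℝ => Real.cosh (ν * z)) (Real.sinh (ν * z) * ν) z :=
    (Real.hasDerivAt_cosh (ν * z)).comp z hmul
  have hS : HasDerivAt (fun z : ℝ =>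
      ν * Real.sinh (ν * z) + t * Real.sinh z * Real.cosh (ν * z))
      (ν * (Real.cosh (ν * z) * ν)
        + ((t * Real.cosh z) * Real.cosh (ν * z)
            + (t * Real.sinh z) * (Real.sinh (ν * z) * ν))) z :=
    (hs1.const_mul ν).add (((Real.hasDerivAt_sinh z).const_mul t).mul hc1)
  have hP : HasDerivAt (besselP ν t)
      ((-t * Real.sinh z * Real.exp (-t * Real.cosh z)) *
          (ν * Real.sinh (ν * z) + t * Real.sinh z * Real.cosh (ν * z))
        + Real.exp (-t * Real.cosh z) *
          (ν * (Real.cosh (ν * z) * ν)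
            + ((t * Real.cosh z) * Real.cosh (ν * z)
                + (t * Real.sinh z) * (Real.sinh (ν * z) * ν)))) z := hE.mul hS
  have := hP.neg
  refine this.congr_deriv (Eq.symm ?_)
  have hsq := Real.sinh_sq z
  linear_combination (-(t^2) * Real.exp (-t * Real.cosh z) * Real.cosh (ν * z)) * hsq

lemma besselP_tendsto (ν t : ℝ) (ht : 0 < t) :
    Tendsto (fun z => -besselP ν t z) atTop (nhds 0) := by
  set C := (|ν| + t) * Real.exp (2 * ((1 + |ν|) + 1) ^ 2 / t) with hC
  have hM : Tendsto (fun z : ℝ => C * Real.exp (-z)) atTop (nhds 0) := by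
    simpa using Real.tendsto_exp_neg_atTop_nhds_zero.const_mul C
  apply squeeze_zero_norm' _ hM
  filter_upwards [eventually_ge_atTop (0:ℝ)] with z hz
  have hb1 : |ν * Real.sinh (ν * z)| ≤ |ν| * Real.exp ((1 + |ν|) * z) := by
    rw [abs_mul]
    apply mul_le_mul_of_nonneg_left _ (abs_nonneg ν)
    calc |Real.sinh (ν * z)| ≤ Real.exp |ν * z| := abs_sinh_le_exp_abs _
      _ ≤ Real.exp ((1 + |ν|) * z) := by
          apply Real.exp_le_exp.2
          rw [abs_mul, abs_of_nonneg hz]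
          nlinarith
  have hb2 : |t * Real.sinh z * Real.cosh (ν * z)| ≤ t * Real.exp ((1 + |ν|) * z) := by
    rw [abs_mul, abs_mul, abs_of_nonneg ht.le, abs_of_pos (Real.cosh_pos _), mul_assoc]
    apply mul_le_mul_of_nonneg_left _ ht.le
    calc |Real.sinh z| * Real.cosh (ν * z) ≤ Real.exp |z| * Real.exp |ν * z| :=
          mul_le_mul (abs_sinh_le_exp_abs _) (cosh_le_exp_abs _) (Real.cosh_pos _).le
            (Real.exp_pos _).le
      _ = Real.exp (|z| + |ν * z|) := (Real.exp_add _ _).symm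
      _ ≤ Real.exp ((1 + |ν|) * z) := by
          apply Real.exp_le_exp.2
          rw [abs_mul, abs_of_nonneg hz]
          nlinarith
  have hb : |besselP ν t z| ≤ (|ν| + t) * Real.exp ((1 + |ν|) * z - t * Real.cosh z) := by
    rw [besselP, abs_mul, abs_of_pos (Real.exp_pos _)]
    calc Real.exp (-t * Real.cosh z) *
          |ν * Real.sinh (ν * z) + t * Real.sinh z * Real.cosh (ν * z)|
        ≤ Real.exp (-t * Real.cosh z) *
            ((|ν| + t) * Real.exp ((1 + |ν|) * z)) := by
          apply mul_le_mul_of_nonneg_left _ (Real.exp_pos _).le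
          calc |ν * Real.sinh (ν * z) + t * Real.sinh z * Real.cosh (ν * z)|
              ≤ |ν * Real.sinh (ν * z)| + |t * Real.sinh z * Real.cosh (ν * z)| := abs_add_le _ _
            _ ≤ (|ν| + t) * Real.exp ((1 + |ν|) * z) := by rw [add_mul]; exact add_le_add hb1 hb2
      _ = (|ν| + t) * Real.exp ((1 + |ν|) * z - t * Real.cosh z) := by
          rw [show (1 + |ν|) * z - t * Real.cosh z
              = (1 + |ν|) * z + -t * Real.cosh z by ring, Real.exp_add]
          ring
  rw [norm_neg, Real.norm_eq_abs]
  refine hb.trans ?_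
  rw [hC, mul_assoc, ← Real.exp_add]
  apply mul_le_mul_of_nonneg_left _ (by positivity)
  exact Real.exp_le_exp.2 (by have := key_bound (1 + |ν|) t ht hz; linarith)

lemma besselKd_ode (ν t : ℝ) (ht : 0 < t) :
    t^2 * besselKd 2 ν t + t * besselKd 1 ν t - (t^2 + ν^2) * besselKd 0 ν t = 0 := by
  have h0 := besselKd_integrableOn 0 ν t ht
  have h1 := besselKd_integrableOn 1 ν t ht
  have h2 := besselKd_integrableOn 2 ν t ht
  have hcomb : (∫ z in Ioi (0:ℝ),
          (t^2 * ((-Real.cosh z) ^ 2 * (Real.exp (-t * Real.cosh z) * Real.cosh (ν * z)))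
            + t * ((-Real.cosh z) ^ 1 * (Real.exp (-t * Real.cosh z) * Real.cosh (ν * z)))
            - (t^2 + ν^2) * ((-Real.cosh z) ^ 0 *
                (Real.exp (-t * Real.cosh z) * Real.cosh (ν * z)))))
      = t^2 * besselKd 2 ν t + t * besselKd 1 ν t - (t^2 + ν^2) * besselKd 0 ν t := by
    have hIa : IntegrableOn (fun z : ℝ =>
        t^2 * ((-Real.cosh z) ^ 2 * (Real.exp (-t * Real.cosh z) * Real.cosh (ν * z)))
          + t * ((-Real.cosh z) ^ 1 * (Real.exp (-t * Real.cosh z) * Real.cosh (ν * z))))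
        (Ioi 0) := (h2.const_mul _).add (h1.const_mul _)
    have hIb : IntegrableOn (fun z : ℝ => (t^2 + ν^2) *
        ((-Real.cosh z) ^ 0 * (Real.exp (-t * Real.cosh z) * Real.cosh (ν * z))))
        (Ioi 0) := h0.const_mul _
    rw [integral_sub hIa hIb,
      integral_add (h2.const_mul _) (h1.const_mul _),
      integral_const_mul, integral_const_mul, integral_const_mul]
    rfl
  rw [← hcomb]
  have hint : IntegrableOn (fun z : ℝ =>
      (t^2 * ((-Real.cosh z) ^ 2 * (Real.exp (-t * Real.cosh z) * Real.cosh (ν * z)))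
        + t * ((-Real.cosh z) ^ 1 * (Real.exp (-t * Real.cosh z) * Real.cosh (ν * z)))
        - (t^2 + ν^2) * ((-Real.cosh z) ^ 0 *
            (Real.exp (-t * Real.cosh z) * Real.cosh (ν * z))))) (Ioi 0) :=
    ((h2.const_mul _).add (h1.const_mul _)).sub (h0.const_mul _)
  have := integral_Ioi_of_hasDerivAt_of_tendsto'
    (f := fun z => -besselP ν t z) (a := 0)
    (fun z _ => hasDerivAt_neg_besselP ν t z) hint (besselP_tendsto ν t ht)
  rw [this]
  simp [besselP]

/-! ### Derivatives of `lamK` -/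

def lam1 (μ₁ δ t : ℝ) : ℝ :=
  (μ₁ + 1) / 2 * (1 + t) ^ ((μ₁ + 1) / 2 - 1) * besselKd 0 (Real.sqrt δ / 2) (1 + t)
    + (1 + t) ^ ((μ₁ + 1) / 2) * besselKd 1 (Real.sqrt δ / 2) (1 + t)

def lam2 (μ₁ δ t : ℝ) : ℝ :=
  (μ₁ + 1) / 2 * (((μ₁ + 1) / 2 - 1) * (1 + t) ^ ((μ₁ + 1) / 2 - 2)
        * besselKd 0 (Real.sqrt δ / 2) (1 + t)
      + (1 + t) ^ ((μ₁ + 1) / 2 - 1) * besselKd 1 (Real.sqrt δ / 2) (1 + t))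
    + ((μ₁ + 1) / 2 * (1 + t) ^ ((μ₁ + 1) / 2 - 1) * besselKd 1 (Real.sqrt δ / 2) (1 + t)
      + (1 + t) ^ ((μ₁ + 1) / 2) * besselKd 2 (Real.sqrt δ / 2) (1 + t))

lemma hasDerivAt_one_add (t : ℝ) : HasDerivAt (fun t : ℝ => 1 + t) 1 t := by
  simpa using (hasDerivAt_id t).const_add 1

lemma hasDerivAt_lamK (μ₁ δ t : ℝ) (ht : -1 < t) :
    HasDerivAt (lamK μ₁ δ) (lam1 μ₁ δ t) t := by
  have hs : (0:ℝ) < 1 + t := by linarith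
  have h1t := hasDerivAt_one_add t
  have hrp : HasDerivAt (fun t : ℝ => (1 + t) ^ ((μ₁ + 1) / 2))
      (1 * ((μ₁ + 1) / 2) * (1 + t) ^ ((μ₁ + 1) / 2 - 1)) t :=
    h1t.rpow_const (Or.inl hs.ne')
  have hK : HasDerivAt (fun t : ℝ => besselKd 0 (Real.sqrt δ / 2) (1 + t))
      (besselKd 1 (Real.sqrt δ / 2) (1 + t) * 1) t :=
    (hasDerivAt_besselKd 0 (Real.sqrt δ / 2) (1 + t) hs).comp t h1t
  have heq : lamK μ₁ δ = fun t : ℝ =>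
      (1 + t) ^ ((μ₁ + 1) / 2) * besselKd 0 (Real.sqrt δ / 2) (1 + t) := by
    funext u; rw [lamK, besselK_eq]
  rw [heq]
  have := hrp.mul hK
  refine this.congr_deriv (Eq.symm ?_)
  rw [lam1]; ring

lemma hasDerivAt_lam1 (μ₁ δ t : ℝ) (ht : -1 < t) :
    HasDerivAt (lam1 μ₁ δ) (lam2 μ₁ δ t) t := by
  have hs : (0:ℝ) < 1 + t := by linarith
  have h1t := hasDerivAt_one_add t
  have hrp1 : HasDerivAt (fun t : ℝ => (1 + t) ^ ((μ₁ + 1) / 2 - 1))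
      (1 * ((μ₁ + 1) / 2 - 1) * (1 + t) ^ ((μ₁ + 1) / 2 - 1 - 1)) t :=
    h1t.rpow_const (Or.inl hs.ne')
  have hrp : HasDerivAt (fun t : ℝ => (1 + t) ^ ((μ₁ + 1) / 2))
      (1 * ((μ₁ + 1) / 2) * (1 + t) ^ ((μ₁ + 1) / 2 - 1)) t :=
    h1t.rpow_const (Or.inl hs.ne')
  have hK0 : HasDerivAt (fun t : ℝ => besselKd 0 (Real.sqrt δ / 2) (1 + t))
      (besselKd 1 (Real.sqrt δ / 2) (1 + t) * 1) t :=
    (hasDerivAt_besselKd 0 (Real.sqrt δ / 2) (1 + t) hs).comp t h1t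
  have hK1 : HasDerivAt (fun t : ℝ => besselKd 1 (Real.sqrt δ / 2) (1 + t))
      (besselKd 2 (Real.sqrt δ / 2) (1 + t) * 1) t :=
    (hasDerivAt_besselKd 1 (Real.sqrt δ / 2) (1 + t) hs).comp t h1t
  have := (((hrp1.mul hK0).const_mul ((μ₁ + 1) / 2)).add (hrp.mul hK1))
  have heq : lam1 μ₁ δ = fun t : ℝ =>
      (μ₁ + 1) / 2 * ((1 + t) ^ ((μ₁ + 1) / 2 - 1) * besselKd 0 (Real.sqrt δ / 2) (1 + t))
        + (1 + t) ^ ((μ₁ + 1) / 2) * besselKd 1 (Real.sqrt δ / 2) (1 + t) := by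
    funext u; rw [lam1]; ring
  rw [heq]
  refine this.congr_deriv (Eq.symm ?_)
  rw [lam2]
  rw [show (μ₁ + 1) / 2 - 1 - 1 = (μ₁ + 1) / 2 - 2 by ring]
  ring

lemma lamK_ode_aux (μ₁ μ₂sq δ t : ℝ) (hδdef : δ = (μ₁ - 1) ^ 2 - 4 * μ₂sq) (hδ : 0 ≤ δ)
    (ht : 0 < t) :
    (1 + t) ^ 2 * lam2 μ₁ δ t - μ₁ * (1 + t) * lam1 μ₁ δ t
      + (μ₁ + μ₂sq - (1 + t) ^ 2) * lamK μ₁ δ t = 0 := by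
  have hs : (0:ℝ) < 1 + t := by linarith
  have hode := besselKd_ode (Real.sqrt δ / 2) (1 + t) hs
  have hν2 : (Real.sqrt δ / 2) ^ 2 = ((μ₁ - 1) ^ 2 - 4 * μ₂sq) / 4 := by
    rw [div_pow, Real.sq_sqrt hδ, hδdef]; norm_num
  have e1 : (1 + t) ^ ((μ₁ + 1) / 2 - 1)
      = (1 + t) ^ ((μ₁ + 1) / 2 - 2) * (1 + t) := by
    have h := Real.rpow_add hs ((μ₁ + 1) / 2 - 2) 1
    rw [show (μ₁ + 1) / 2 - 2 + 1 = (μ₁ + 1) / 2 - 1 by ring, Real.rpow_one] at h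
    exact h
  have e2 : (1 + t) ^ ((μ₁ + 1) / 2)
      = (1 + t) ^ ((μ₁ + 1) / 2 - 2) * (1 + t) ^ (2:ℕ) := by
    have h := Real.rpow_add hs ((μ₁ + 1) / 2 - 2) 2
    rw [show (μ₁ + 1) / 2 - 2 + 2 = (μ₁ + 1) / 2 by ring,
      show ((2:ℝ)) = ((2:ℕ):ℝ) by norm_num, Real.rpow_natCast] at h
    exact h
  rw [lamK, besselK_eq, lam1, lam2, e1, e2]
  linear_combination ((1 + t) ^ ((μ₁ + 1) / 2 - 2) * (1 + t)^2) * hode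
    + ((1 + t) ^ ((μ₁ + 1) / 2 - 2) * (1 + t)^2
        * besselKd 0 (Real.sqrt δ / 2) (1 + t)) * hν2

/-! ### Decay at infinity -/

lemma besselK_integrableOn (ν x : ℝ) (hx : 0 < x) :
    IntegrableOn (fun z : ℝ => Real.exp (-x * Real.cosh z) * Real.cosh (ν * z)) (Ioi 0) := by
  have := besselKd_integrableOn 0 ν x hx
  simpa using this

lemma besselK_nonneg (ν s : ℝ) : 0 ≤ besselK ν s := by
  apply setIntegral_nonneg measurableSet_Ioi
  intro z _
  positivity

lemma besselK_le (ν s : ℝ) (hs : 2 ≤ s) :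
    besselK ν s ≤ Real.exp (2 - s) * besselK ν 2 := by
  rw [besselK, besselK, ← integral_const_mul]
  apply setIntegral_mono_on (besselK_integrableOn ν s (by linarith))
    ((besselK_integrableOn ν 2 two_pos).const_mul _) measurableSet_Ioi
  intro z _
  rw [← mul_assoc, ← Real.exp_add]
  apply mul_le_mul_of_nonneg_right _ (Real.cosh_pos _).le
  apply Real.exp_le_exp.2
  nlinarith [Real.one_le_cosh z]

lemma lamK_tendsto (μ₁ δ : ℝ) : Tendsto (lamK μ₁ δ) atTop (nhds 0) := by
  set ν := Real.sqrt δ / 2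
  set a := (μ₁ + 1) / 2
  set C := besselK ν 2 * Real.exp 2 with hC
  have hup : Tendsto (fun t : ℝ => C * ((1 + t) ^ a * Real.exp (-1 * (1 + t))))
      atTop (nhds 0) := by
    have h1 : Tendsto (fun x : ℝ => x ^ a * Real.exp (-1 * x)) atTop (nhds 0) :=
      tendsto_rpow_mul_exp_neg_mul_atTop_nhds_zero a 1 one_pos
    have h2 : Tendsto (fun t : ℝ => 1 + t) atTop atTop :=
      tendsto_atTop_add_const_left _ 1 tendsto_id
    simpa using (h1.comp h2).const_mul C
  apply squeeze_zero' _ _ hup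
  · filter_upwards [eventually_ge_atTop (0:ℝ)] with t ht
    have : (0:ℝ) ≤ 1 + t := by linarith
    exact mul_nonneg (Real.rpow_nonneg this _) (besselK_nonneg _ _)
  · filter_upwards [eventually_ge_atTop (1:ℝ)] with t ht
    have h2t : (2:ℝ) ≤ 1 + t := by linarith
    calc lamK μ₁ δ t ≤ (1 + t) ^ a * (Real.exp (2 - (1 + t)) * besselK ν 2) := by
          rw [lamK]
          exact mul_le_mul_of_nonneg_left (besselK_le ν (1 + t) h2t)
            (Real.rpow_nonneg (by linarith) _)
      _ = C * ((1 + t) ^ a * Real.exp (-1 * (1 + t))) := by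
          rw [hC, show (2 : ℝ) - (1 + t) = 2 + -1 * (1 + t) by ring, Real.exp_add]
          ring

/-- equation (2.4): `λ(t) = (1+t)^{(μ₁+1)/2} K_{√δ/2}(1+t)` is twice
differentiable on `(0,∞)` and satisfies
`(1+t)² λ'' − μ₁(1+t) λ' + (μ₁ + μ₂² − (1+t)²) λ = 0` for `t > 0`;
moreover `λ(0) = K_{√δ/2}(1)` and `λ(t) → 0` as `t → ∞`. -/
theorem lamK_ode
    (μ₁ μ₂sq : ℝ) (hμ₁ : 0 ≤ μ₁) (hμ₂ : 0 ≤ μ₂sq)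
    (δ : ℝ) (hδdef : δ = (μ₁ - 1) ^ 2 - 4 * μ₂sq) (hδ : 0 ≤ δ) :
    (∀ t : ℝ, 0 < t →
      DifferentiableAt ℝ (lamK μ₁ δ) t ∧ DifferentiableAt ℝ (deriv (lamK μ₁ δ)) t) ∧
    (∀ t : ℝ, 0 < t →
      (1 + t) ^ 2 * deriv (deriv (lamK μ₁ δ)) t - μ₁ * (1 + t) * deriv (lamK μ₁ δ) t
        + (μ₁ + μ₂sq - (1 + t) ^ 2) * lamK μ₁ δ t = 0) ∧
    lamK μ₁ δ 0 = besselK (Real.sqrt δ / 2) 1 ∧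
    Tendsto (lamK μ₁ δ) atTop (nhds 0) := by
  have hev : ∀ t : ℝ, 0 < t → deriv (lamK μ₁ δ) =ᶠ[nhds t] lam1 μ₁ δ := by
    intro t ht
    filter_upwards [Ioi_mem_nhds (show (-1:ℝ) < t by linarith)] with s hs
    exact (hasDerivAt_lamK μ₁ δ s hs).deriv
  refine ⟨?_, ?_, ?_, lamK_tendsto μ₁ δ⟩
  · intro t ht
    refine ⟨(hasDerivAt_lamK μ₁ δ t (by linarith)).differentiableAt, ?_⟩
    exact ((hev t ht).differentiableAt_iff).2
      (hasDerivAt_lam1 μ₁ δ t (by linarith)).differentiableAt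
  · intro t ht
    have h1 : deriv (lamK μ₁ δ) t = lam1 μ₁ δ t := (hasDerivAt_lamK μ₁ δ t (by linarith)).deriv
    have h2 : deriv (deriv (lamK μ₁ δ)) t = lam2 μ₁ δ t := by
      rw [(hev t ht).deriv_eq]
      exact (hasDerivAt_lam1 μ₁ δ t (by linarith)).deriv
    rw [h1, h2]
    exact lamK_ode_aux μ₁ μ₂sq δ t hδdef hδ ht
  · simp [lamK]

end
end

section
/- Let G : [0,∞) → [0,∞) be continuous, and define H(t) := ∫₀ᵗ (t−s)(1+s) G(s) ds and J(t) := ∫₀ᵗ (2+s)^{−3} H(s) ds. Then for all t ≥ 0: (1+t)² J(t) ≤ (1/2) ∫₀ᵗ (t−s)² G(s) ds. -/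
open MeasureTheory Real Set Filter

noncomputable section

/-- Lemma 4.4: for continuous nonnegative `G` with
`H(t) = ∫₀ᵗ (t−s)(1+s)G(s) ds` and `J(t) = ∫₀ᵗ (2+s)^{−3} H(s) ds`, one has
`(1+t)² J(t) ≤ (1/2) ∫₀ᵗ (t−s)² G(s) ds` for all `t ≥ 0`. -/
theorem J_le_quadratic_average
    (G : ℝ → ℝ) (hGc : Continuous G) (hGpos : ∀ t, 0 ≤ G t)
    (H J : ℝ → ℝ)
    (hH : H = fun t => ∫ s in (0:ℝ)..t, (t - s) * (1 + s) * G s)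
    (hJ : J = fun t => ∫ s in (0:ℝ)..t, (2 + s) ^ (-(3:ℤ)) * H s) :
    ∀ t : ℝ, 0 ≤ t →
      (1 + t) ^ 2 * J t ≤ (1 / 2) * ∫ s in (0:ℝ)..t, (t - s) ^ 2 * G s := by
  intro t ht
  have h2t : (0:ℝ) < 2 + t := by linarith
  set c : ℝ := 2 * (2 + t) ^ 2 with hc
  have hcpos : 0 < c := by positivity
  -- auxiliary functions
  set A : ℝ → ℝ := fun s => ∫ σ in (0:ℝ)..s, (1 + σ) * G σ with hAdef
  set B : ℝ → ℝ := fun s => ∫ σ in (0:ℝ)..s, σ * ((1 + σ) * G σ) with hBdef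
  have hG1 : Continuous fun σ : ℝ => (1 + σ) * G σ := by continuity
  have hG2 : Continuous fun σ : ℝ => σ * ((1 + σ) * G σ) := by continuity
  have hA' : ∀ s, HasDerivAt A ((1 + s) * G s) s := by
    intro s
    exact intervalIntegral.integral_hasDerivAt_right (hG1.intervalIntegrable _ _)
      (hG1.stronglyMeasurableAtFilter _ _) hG1.continuousAt
  have hB' : ∀ s, HasDerivAt B (s * ((1 + s) * G s)) s := by
    intro s
    exact intervalIntegral.integral_hasDerivAt_right (hG2.intervalIntegrable _ _)
      (hG2.stronglyMeasurableAtFilter _ _) hG2.continuousAt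
  have hHsplit : H = fun s => s * A s - B s := by
    rw [hH]
    funext s
    have : ∀ σ : ℝ, (s - σ) * (1 + σ) * G σ = s * ((1 + σ) * G σ) - σ * ((1 + σ) * G σ) := by
      intro σ; ring
    simp_rw [this]
    rw [intervalIntegral.integral_sub (f := fun σ => s * ((1 + σ) * G σ)) (g := fun σ => σ * ((1 + σ) * G σ)) ((continuous_const.mul hG1).intervalIntegrable _ _)
      (hG2.intervalIntegrable _ _), intervalIntegral.integral_const_mul]
  have hH' : ∀ s, HasDerivAt H (A s) s := by
    intro s
    have h := ((hasDerivAt_id s).mul (hA' s)).sub (hB' s)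
    rw [hHsplit]
    refine h.congr_deriv (Eq.symm ?_)
    simp only [id_eq]
    ring
  have hHcont : Continuous H := by
    rw [continuous_iff_continuousAt]
    exact fun s => (hH' s).differentiableAt.continuousAt
  have hAcont : Continuous A := by
    rw [continuous_iff_continuousAt]
    exact fun s => (hA' s).differentiableAt.continuousAt
  -- the two auxiliary kernels
  set ψ : ℝ → ℝ := fun s => (1 - (2 + t) ^ 2 * ((2 + s) ^ 2)⁻¹) / c with hψdef
  set φ : ℝ → ℝ := fun s => (t - s) ^ 2 * (2 + s)⁻¹ / c with hφdef
  have huIcc : uIcc (0:ℝ) t = Icc 0 t := uIcc_of_le ht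
  have h2s : ∀ s ∈ uIcc (0:ℝ) t, (0:ℝ) < 2 + s := by
    intro s hs
    rw [huIcc] at hs
    have := hs.1; linarith
  have hψ' : ∀ s ∈ uIcc (0:ℝ) t, HasDerivAt ψ ((2 + s) ^ (-(3:ℤ))) s := by
    intro s hs
    have h2 : (0:ℝ) < 2 + s := h2s s hs
    have hbase : HasDerivAt (fun s : ℝ => 2 + s) 1 s := by
      simpa using (hasDerivAt_id s).const_add 2
    have hpow : HasDerivAt (fun s : ℝ => (2 + s) ^ 2) (2 * (2 + s) ^ 1 * 1) s := hbase.pow 2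
    have hinv := hpow.inv (by positivity)
    have h := ((hasDerivAt_const s (1:ℝ)).sub (hinv.const_mul ((2 + t) ^ 2))).div_const c
    refine h.congr_deriv (Eq.symm ?_)
    rw [zpow_neg]
    have h3 : ((2:ℝ) + s) ^ (3:ℤ) = (2 + s) ^ (3:ℕ) := by norm_cast
    rw [h3]
    field_simp
    rw [hc]
    ring
  have hφ' : ∀ s ∈ uIcc (0:ℝ) t, HasDerivAt φ (ψ s) s := by
    intro s hs
    have h2 : (0:ℝ) < 2 + s := h2s s hs
    have hbase : HasDerivAt (fun s : ℝ => 2 + s) 1 s := by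
      simpa using (hasDerivAt_id s).const_add 2
    have hts : HasDerivAt (fun s : ℝ => t - s) (-1) s := by
      simpa using (hasDerivAt_id s).const_sub t
    have hp : HasDerivAt (fun s : ℝ => (t - s) ^ 2) (2 * (t - s) ^ 1 * (-1)) s := hts.pow 2
    have hinv := hbase.inv (ne_of_gt h2)
    have h := (hp.mul hinv).div_const c
    refine h.congr_deriv (Eq.symm ?_)
    rw [hψdef]
    simp only [Pi.inv_apply]
    field_simp
    ring
  have hψcont : ContinuousOn ψ (uIcc (0:ℝ) t) := fun s hs =>
    (hψ' s hs).differentiableAt.continuousAt.continuousWithinAt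
  have hφcont : ContinuousOn φ (uIcc (0:ℝ) t) := fun s hs =>
    (hφ' s hs).differentiableAt.continuousAt.continuousWithinAt
  have hzcont : ContinuousOn (fun s : ℝ => (2 + s) ^ (-(3:ℤ))) (uIcc (0:ℝ) t) := by
    intro s hs
    have h2 : (0:ℝ) < 2 + s := h2s s hs
    exact ((continuousAt_const.add continuousAt_id).zpow₀ _
      (Or.inl (ne_of_gt h2))).continuousWithinAt
  -- First integration by parts : J t = H t * ψ t - ∫ A s * ψ s
  have hψt : ψ t = 0 := by
    rw [hψdef]
    field_simp
    ring
  have hφt : φ t = 0 := by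
    rw [hφdef]; simp
  have hH0 : H 0 = 0 := by rw [hH]; simp
  have hA0 : A 0 = 0 := by rw [hAdef]; simp [intervalIntegral.integral_same]
  have ibp1 : (∫ s in (0:ℝ)..t, H s * (2 + s) ^ (-(3:ℤ)))
      = H t * ψ t - H 0 * ψ 0 - ∫ s in (0:ℝ)..t, A s * ψ s := by
    exact intervalIntegral.integral_mul_deriv_eq_deriv_mul
      (fun x _ => hH' x) hψ'
      (hAcont.intervalIntegrable _ _) (hzcont.intervalIntegrable)
  have ibp2 : (∫ s in (0:ℝ)..t, A s * ψ s)
      = A t * φ t - A 0 * φ 0 - ∫ s in (0:ℝ)..t, ((1 + s) * G s) * φ s := by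
    exact intervalIntegral.integral_mul_deriv_eq_deriv_mul
      (fun x _ => hA' x) hφ'
      (hG1.intervalIntegrable _ _) (hψcont.intervalIntegrable)
  have hJt : J t = ∫ s in (0:ℝ)..t, ((1 + s) * G s) * φ s := by
    rw [hJ]
    simp only
    have : ∀ s : ℝ, (2 + s) ^ (-(3:ℤ)) * H s = H s * (2 + s) ^ (-(3:ℤ)) := fun s => mul_comm _ _
    simp_rw [this]
    rw [ibp1, ibp2, hψt, hφt, hH0, hA0]
    ring
  -- final comparison
  rw [hJt, ← intervalIntegral.integral_const_mul, ← intervalIntegral.integral_const_mul]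
  apply intervalIntegral.integral_mono_on ht
  · exact (continuousOn_const.mul ((hG1.continuousOn.mul hφcont))).intervalIntegrable
  · exact (continuous_const.mul (((continuous_const.sub continuous_id).pow 2).mul
      hGc)).intervalIntegrable _ _
  · intro s hs
    obtain ⟨hs0, hst⟩ := hs
    have h2 : (0:ℝ) < 2 + s := by linarith
    have hGs := hGpos s
    have heq : (1 + t) ^ 2 * ((1 + s) * G s * φ s)
        = ((1 + t) ^ 2 * (1 + s) / ((2 + s) * c)) * ((t - s) ^ 2 * G s) := by
      rw [hφdef]
      field_simp
    have hr : (1 + t) ^ 2 * (1 + s) / ((2 + s) * c) ≤ 1 / 2 := by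
      rw [div_le_div_iff₀ (by positivity) (by norm_num)]
      rw [hc]
      nlinarith [sq_nonneg (1 + t), sq_nonneg t, mul_nonneg hs0 ht]
    calc (1 + t) ^ 2 * ((1 + s) * G s * φ s)
        = ((1 + t) ^ 2 * (1 + s) / ((2 + s) * c)) * ((t - s) ^ 2 * G s) := heq
      _ ≤ 1 / 2 * ((t - s) ^ 2 * G s) :=
          mul_le_mul_of_nonneg_right hr (by positivity)
end
end
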